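/- arXiv:1902.09783 — 3 statements merged into one kernel-verified Lean document; each statement's English description precedes it below -/
import Mathlib

section
/- Let P = (X, Y, R) be a polarity and S ⊆ Xⁿ × Y a relation all of whose sections are stable. Then: (a) f_S maps n-tuples of stable subsets of X to stable subsets of X; (b) f_S is a complete normal operator on P⁺: for each coordinate i < n, every n-tuple A⃗ of stable sets and every (possibly empty) family {B_j}_{j∈J} of stable sets, f_S(A⃗[⋁_J B_j / i]) = ⋁_J f_S(A⃗[B_j / i]), where ⋁𝒞 = λ_R ρ_R(⋃𝒞) and A⃗[B/i] replaces the i-th entry of A⃗ by B; (c) S equals the relation S_{f_S}, i.e. x⃗ S y iff y ∈ ρ_R(f_S(⟨x₀⟩, …, ⟨x_{n−1}⟩)), where ⟨x⟩ = λ_R ρ_R {x}. -/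
/-- The right polar `ρ_R A = {y ∈ Y : ∀ x ∈ A, x R y}`. -/
def rpolar {X Y : Type*} (R : X → Y → Prop) (A : Set X) : Set Y := {y | ∀ x ∈ A, R x y}

/-- The left polar `λ_R B = {x ∈ X : ∀ y ∈ B, x R y}`. -/
def lpolar {X Y : Type*} (R : X → Y → Prop) (B : Set Y) : Set X := {x | ∀ y ∈ B, R x y}

/-- `A ⊆ X` is stable if `A = λ_R (ρ_R A)`. -/
def StableX {X Y : Type*} (R : X → Y → Prop) (A : Set X) : Prop := A = lpolar R (rpolar R A)

/-- `B ⊆ Y` is stable if `B = ρ_R (λ_R B)`. -/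
def StableY {X Y : Type*} (R : X → Y → Prop) (B : Set Y) : Prop := B = rpolar R (lpolar R B)

/-- The quasi-order `≤₁` on `X`. -/
def le1 {X Y : Type*} (R : X → Y → Prop) (x x' : X) : Prop := rpolar R {x} ⊆ rpolar R {x'}

/-- The quasi-order `≤₂` on `Y`. -/
def le2 {X Y : Type*} (R : X → Y → Prop) (y y' : Y) : Prop := lpolar R {y} ⊆ lpolar R {y'}

/-- The operator `f_S` induced on stable sets by `S ⊆ Xⁿ × Y`. -/
def fS {X Y : Type*} {n : ℕ} (R : X → Y → Prop) (S : (Fin n → X) → Y → Prop)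
    (A : Fin n → Set X) : Set X :=
  lpolar R {y | ∀ xs : Fin n → X, (∀ i, xs i ∈ A i) → S xs y}

/-- The dual operator `g_T` induced on stable sets by `T ⊆ X × Yᵐ`. -/
def gT {X Y : Type*} {m : ℕ} (R : X → Y → Prop) (T : X → (Fin m → Y) → Prop)
    (A : Fin m → Set X) : Set X :=
  {x | ∀ ys : Fin m → Y, (∀ i, ys i ∈ rpolar R (A i)) → T x ys}

/-- All sections of `S ⊆ Xⁿ × Y` are stable. -/
def SSectionsStable {X Y : Type*} {n : ℕ} (R : X → Y → Prop)
    (S : (Fin n → X) → Y → Prop) : Prop :=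
  (∀ xs : Fin n → X, StableY R {y | S xs y}) ∧
  (∀ (xs : Fin n → X) (i : Fin n) (y : Y), StableX R {x' | S (Function.update xs i x') y})

/-- All sections of `T ⊆ X × Yᵐ` are stable. -/
def TSectionsStable {X Y : Type*} {m : ℕ} (R : X → Y → Prop)
    (T : X → (Fin m → Y) → Prop) : Prop :=
  (∀ ys : Fin m → Y, StableX R {x | T x ys}) ∧
  (∀ (x : X) (ys : Fin m → Y) (i : Fin m), StableY R {y' | T x (Function.update ys i y')})

section aux
variable {X Y : Type*} (R : X → Y → Prop)

lemma aux_sub_lr (A : Set X) : A ⊆ lpolar R (rpolar R A) :=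
  fun x hx _ hy => hy x hx

lemma aux_sub_rl (B : Set Y) : B ⊆ rpolar R (lpolar R B) :=
  fun y hy _ hx => hx y hy

lemma aux_lr_mono {A A' : Set X} (h : A ⊆ A') :
    lpolar R (rpolar R A) ⊆ lpolar R (rpolar R A') :=
  fun _ hx y hy => hx y (fun x' hx' => hy x' (h hx'))

lemma aux_rl_mono {B B' : Set Y} (h : B ⊆ B') :
    rpolar R (lpolar R B) ⊆ rpolar R (lpolar R B') :=
  fun _ hy x hx => hy x (fun y' hy' => hx y' (h hy'))

lemma aux_stableX_lpolar (B : Set Y) : StableX R (lpolar R B) := by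
  apply Set.eq_of_subset_of_subset (aux_sub_lr R _)
  intro x hx y hy
  exact hx y (aux_sub_rl R B hy)

lemma aux_cl_singleton_sub {A : Set X} (hA : StableX R A) {x : X} (hx : x ∈ A) :
    lpolar R (rpolar R {x}) ⊆ A := by
  have h := aux_lr_mono R (Set.singleton_subset_iff.2 hx)
  rw [← hA] at h; exact h

/-- Coordinate-by-coordinate replacement within closures of singletons. -/
lemma aux_K1 {n : ℕ} (S : (Fin n → X) → Y → Prop)
    (hsec : ∀ (xs : Fin n → X) (i : Fin n) (y : Y),
      StableX R {x' | S (Function.update xs i x') y})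
    (xs xs' : Fin n → X) (y : Y)
    (h : ∀ i, xs' i ∈ lpolar R (rpolar R {xs i})) (hxy : S xs y) : S xs' y := by
  classical
  have key : ∀ s : Finset (Fin n), S (fun i => if i ∈ s then xs' i else xs i) y := by
    intro s
    induction s using Finset.induction_on with
    | empty => simpa using hxy
    | insert j s hj ih =>
      set f : Fin n → X := fun i => if i ∈ s then xs' i else xs i with hf
      have hfun : (fun i => if i ∈ insert j s then xs' i else xs i)
          = Function.update f j (xs' j) := by
        funext i
        by_cases hij : i = j
        · subst hij; simp [Function.update, f]
        · simp [Function.update, hij, f, Finset.mem_insert]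
      rw [hfun]
      have hfj : f j = xs j := by simp [f, hj]
      have hmem : xs j ∈ {x' | S (Function.update f j x') y} := by
        show S (Function.update f j (xs j)) y
        rw [← hfj, Function.update_eq_self]
        exact ih
      exact aux_cl_singleton_sub R (hsec f j y) hmem (h j)
  have := key Finset.univ
  simpa using this

/-- The closure can be removed inside the i-th slot of `Ŝ`. -/
lemma aux_K2 {n : ℕ} (S : (Fin n → X) → Y → Prop)
    (hsec : ∀ (xs : Fin n → X) (i : Fin n) (y : Y),
      StableX R {x' | S (Function.update xs i x') y})
    (A : Fin n → Set X) (i : Fin n) (C : Set X) :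
    {y | ∀ xs : Fin n → X,
        (∀ j, xs j ∈ Function.update A i (lpolar R (rpolar R C)) j) → S xs y}
      = {y | ∀ xs : Fin n → X, (∀ j, xs j ∈ Function.update A i C j) → S xs y} := by
  classical
  ext y
  constructor
  · intro hy xs hxs
    apply hy
    intro j
    by_cases hji : j = i
    · subst hji
      have := hxs j
      rw [Function.update_self] at this ⊢
      exact aux_sub_lr R C this
    · have h2 := hxs j
      rw [Function.update_of_ne hji] at h2 ⊢
      exact h2
  · intro hy xs hxs
    have hC : C ⊆ {x' | S (Function.update xs i x') y} := by
      intro c hc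
      apply hy
      intro j
      by_cases hji : j = i
      · subst hji; simp [hc]
      · have h2 := hxs j
        rw [Function.update_of_ne hji] at h2
        simp only [Function.update_of_ne hji]
        exact h2
    have hcl : lpolar R (rpolar R C) ⊆ {x' | S (Function.update xs i x') y} := by
      intro x' hx'
      have h2 := aux_lr_mono R hC hx'
      rw [← hsec xs i y] at h2
      exact h2
    have hxi : xs i ∈ lpolar R (rpolar R C) := by
      have := hxs i; rwa [Function.update_self] at this
    have := hcl hxi
    simpa [Function.update_eq_self] using this

/-- An intersection of stable `Y`-sets of section type is stable. -/
lemma aux_stableY_inter {ι : Sort*} (P : ι → Prop) (F : ι → Set Y)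
    (hF : ∀ k, P k → StableY R (F k)) :
    StableY R {y | ∀ k, P k → y ∈ F k} := by
  apply Set.eq_of_subset_of_subset (aux_sub_rl R _)
  intro y hy k hk
  have hsub : {y | ∀ k, P k → y ∈ F k} ⊆ F k := fun y' hy' => hy' k hk
  have := aux_rl_mono R hsub hy
  rw [← hF k hk] at this
  exact this

/-- λ of an intersection of stable sets is the closure of the union of their λ's. -/
lemma aux_L2 {ι : Type*} (𝒞 : Set ι) (F : ι → Set Y)
    (hF : ∀ k ∈ 𝒞, StableY R (F k)) :
    lpolar R {y | ∀ k ∈ 𝒞, y ∈ F k}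
      = lpolar R (rpolar R (⋃ k ∈ 𝒞, lpolar R (F k))) := by
  ext x
  constructor
  · intro hx y hy
    apply hx
    intro k hk
    rw [hF k hk]
    intro x' hx'
    exact hy x' (Set.mem_biUnion hk hx')
  · intro hx y hy
    apply hx
    intro x' hx'
    rcases Set.mem_iUnion₂.1 hx' with ⟨k, hk, hx'k⟩
    exact hx'k y (hy k hk)

end aux

/-- If all sections of `S ⊆ Xⁿ × Y` are stable, then `f_S` is a complete normal operator
on the stable set lattice, and `S` equals the relation `S_{f_S}` it determines. -/
theorem stmt2 {X Y : Type*} {n : ℕ} (R : X → Y → Prop)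
    (S : (Fin n → X) → Y → Prop) (hS : SSectionsStable R S) :
    -- (a) `f_S` maps tuples of stable sets to stable sets
    (∀ A : Fin n → Set X, (∀ i, StableX R (A i)) → StableX R (fS R S A)) ∧
    -- (b) `f_S` preserves arbitrary (including empty) joins in each coordinate
    (∀ (i : Fin n) (A : Fin n → Set X), (∀ j, StableX R (A j)) →
      ∀ 𝒞 : Set (Set X), (∀ B ∈ 𝒞, StableX R B) →
        fS R S (Function.update A i (lpolar R (rpolar R (⋃₀ 𝒞)))) =
          lpolar R (rpolar R (⋃ B ∈ 𝒞, fS R S (Function.update A i B)))) ∧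
    -- (c) `S = S_{f_S}`
    (∀ (xs : Fin n → X) (y : Y),
      S xs y ↔ y ∈ rpolar R (fS R S (fun i => lpolar R (rpolar R {xs i})))) := by
  obtain ⟨hS1, hS2⟩ := hS
  refine ⟨?_, ?_, ?_⟩
  · intro A _
    exact aux_stableX_lpolar R _
  · intro i A _ 𝒞 _
    have step1 := aux_K2 R S hS2 A i (⋃₀ 𝒞)
    have step2 : {y | ∀ xs : Fin n → X,
          (∀ j, xs j ∈ Function.update A i (⋃₀ 𝒞) j) → S xs y}
        = {y | ∀ B ∈ 𝒞, y ∈ {y | ∀ xs : Fin n → X,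
            (∀ j, xs j ∈ Function.update A i B j) → S xs y}} := by
      ext y
      constructor
      · intro hy B hB xs hxs
        apply hy
        intro j
        by_cases hji : j = i
        · subst hji
          have h2 := hxs j
          rw [Function.update_self] at h2 ⊢
          exact ⟨B, hB, h2⟩
        · have h2 := hxs j
          rw [Function.update_of_ne hji] at h2 ⊢
          exact h2
      · intro hy xs hxs
        have hxi := hxs i
        rw [Function.update_self] at hxi
        rcases hxi with ⟨B, hB, hxB⟩
        refine hy B hB xs ?_
        intro j
        by_cases hji : j = i
        · subst hji
          rw [Function.update_self]
          exact hxB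
        · have h2 := hxs j
          rw [Function.update_of_ne hji] at h2 ⊢
          exact h2
    have step3 : ∀ B ∈ 𝒞, StableY R {y | ∀ xs : Fin n → X,
        (∀ j, xs j ∈ Function.update A i B j) → S xs y} :=
      fun B _ => aux_stableY_inter R _ (fun xs => {y | S xs y}) (fun xs _ => hS1 xs)
    have step4 := aux_L2 R 𝒞 (fun B => {y | ∀ xs : Fin n → X,
        (∀ j, xs j ∈ Function.update A i B j) → S xs y}) step3
    show lpolar R {y | ∀ xs : Fin n → X,
        (∀ j, xs j ∈ Function.update A i (lpolar R (rpolar R (⋃₀ 𝒞))) j) → S xs y}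
      = lpolar R (rpolar R (⋃ B ∈ 𝒞, fS R S (Function.update A i B)))
    rw [step1, step2]
    exact step4
  · intro xs y
    have hset : {y' | ∀ xs' : Fin n → X,
          (∀ i, xs' i ∈ lpolar R (rpolar R {xs i})) → S xs' y'} = {y' | S xs y'} := by
      ext y'
      constructor
      · intro h
        exact h xs (fun i => aux_sub_lr R {xs i} rfl)
      · intro h xs' hxs'
        exact aux_K1 R S hS2 xs xs' y' hxs' h
    have hrw : rpolar R (fS R S (fun i => lpolar R (rpolar R {xs i}))) = {y' | S xs y'} := by
      show rpolar R (lpolar R {y' | ∀ xs' : Fin n → X,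
          (∀ i, xs' i ∈ lpolar R (rpolar R {xs i})) → S xs' y'}) = _
      rw [hset]
      exact (hS1 xs).symm
    rw [hrw]
    exact Iff.rfl
end

section
/- If the Ω-polarity P = (X, Y, R, S, T) is an inner substructure of the Ω-polarity P′ = (X′, Y′, R′, S′, T′), then the map A ↦ A ∩ X sends stable subsets of X′ (in P′) onto stable subsets of X (in P), is surjective, and is a homomorphism of stable set lattices with operators: it preserves binary intersections, binary joins (A ∨ B = λ_R ρ_R(A ∪ B)), top, bottom, and satisfies (f_{S′}(A₀,…,A_{n−1})) ∩ X = f_S(A₀ ∩ X,…,A_{n−1} ∩ X) and (g_{T′}(A₀,…,A_{m−1})) ∩ X = g_T(A₀ ∩ X,…,A_{m−1} ∩ X) for all tuples of stable subsets of X′. -/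
/-- A bounded morphism between plain polarities. -/
structure IsPolarityMorphism {X Y X' Y' : Type*} (R : X → Y → Prop) (R' : X' → Y' → Prop)
    (α : X → X') (β : Y → Y') : Prop where
  mono1 : ∀ ⦃x z : X⦄, le1 R x z → le1 R' (α x) (α z)
  mono2 : ∀ ⦃y w : Y⦄, le2 R y w → le2 R' (β y) (β w)
  backR : ∀ ⦃x : X⦄ ⦃y : Y⦄, R' (α x) (β y) → R x y
  forthR1 : ∀ ⦃x' : X'⦄ ⦃y : Y⦄, (∀ x : X, le1 R' x' (α x) → R x y) → R' x' (β y)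
  forthR2 : ∀ ⦃x : X⦄ ⦃y' : Y'⦄, (∀ y : Y, le2 R' y' (β y) → R x y) → R' (α x) y'

/-- A bounded morphism between Ω-polarities. -/
structure IsBddMorphism {X Y X' Y' : Type*} {n m : ℕ}
    (R : X → Y → Prop) (S : (Fin n → X) → Y → Prop) (T : X → (Fin m → Y) → Prop)
    (R' : X' → Y' → Prop) (S' : (Fin n → X') → Y' → Prop) (T' : X' → (Fin m → Y') → Prop)
    (α : X → X') (β : Y → Y') : Prop where
  mono1 : ∀ ⦃x z : X⦄, le1 R x z → le1 R' (α x) (α z)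
  mono2 : ∀ ⦃y w : Y⦄, le2 R y w → le2 R' (β y) (β w)
  backR : ∀ ⦃x : X⦄ ⦃y : Y⦄, R' (α x) (β y) → R x y
  forthR1 : ∀ ⦃x' : X'⦄ ⦃y : Y⦄, (∀ x : X, le1 R' x' (α x) → R x y) → R' x' (β y)
  forthR2 : ∀ ⦃x : X⦄ ⦃y' : Y'⦄, (∀ y : Y, le2 R' y' (β y) → R x y) → R' (α x) y'
  backS : ∀ ⦃xs : Fin n → X⦄ ⦃y : Y⦄, S' (fun i => α (xs i)) (β y) → S xs y
  forthS : ∀ ⦃xs' : Fin n → X'⦄ ⦃y : Y⦄,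
    (∀ xs : Fin n → X, (∀ i, le1 R' (xs' i) (α (xs i))) → S xs y) → S' xs' (β y)
  backT : ∀ ⦃x : X⦄ ⦃ys : Fin m → Y⦄, T' (α x) (fun i => β (ys i)) → T x ys
  forthT : ∀ ⦃x : X⦄ ⦃ys' : Fin m → Y'⦄,
    (∀ ys : Fin m → Y, (∀ i, le2 R' (ys' i) (β (ys i))) → T x ys) → T' (α x) ys'

theorem lp_rp_sub {X Y : Type*} (R : X → Y → Prop) (A : Set X) :
    A ⊆ lpolar R (rpolar R A) := fun x hx y hy => hy x hx

theorem rp_lp_sub {X Y : Type*} (R : X → Y → Prop) (B : Set Y) :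
    B ⊆ rpolar R (lpolar R B) := fun y hy x hx => hx y hy

theorem rpolar_anti {X Y : Type*} (R : X → Y → Prop) {A B : Set X} (h : A ⊆ B) :
    rpolar R B ⊆ rpolar R A := fun y hy x hx => hy x (h hx)

theorem lpolar_anti {X Y : Type*} (R : X → Y → Prop) {A B : Set Y} (h : A ⊆ B) :
    lpolar R B ⊆ lpolar R A := fun x hx y hy => hx y (h hy)

theorem lpolar_stable {X Y : Type*} (R : X → Y → Prop) (B : Set Y) :
    StableX R (lpolar R B) :=
  Set.Subset.antisymm (lp_rp_sub R _) (lpolar_anti R (rp_lp_sub R B))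

theorem rpolar_stable {X Y : Type*} (R : X → Y → Prop) (A : Set X) :
    StableY R (rpolar R A) :=
  Set.Subset.antisymm (rp_lp_sub R _) (rpolar_anti R (lp_rp_sub R A))

theorem stableX_up {X Y : Type*} (R : X → Y → Prop) {A : Set X} (hA : StableX R A)
    {a z : X} (ha : a ∈ A) (h : le1 R a z) : z ∈ A := by
  rw [hA]
  intro y hy
  exact h (rpolar_anti R (Set.singleton_subset_iff.mpr ha) hy) z rfl

theorem stableY_up {X Y : Type*} (R : X → Y → Prop) {B : Set Y} (hB : StableY R B)
    {b w : Y} (hb : b ∈ B) (h : le2 R b w) : w ∈ B := by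
  rw [hB]
  intro x hx
  exact h (lpolar_anti R (Set.singleton_subset_iff.mpr hb) hx) w rfl

theorem rpolar_union {X Y : Type*} (R : X → Y → Prop) (A B : Set X) :
    rpolar R (A ∪ B) = rpolar R A ∩ rpolar R B := by
  ext y
  exact ⟨fun h => ⟨fun x hx => h x (Or.inl hx), fun x hx => h x (Or.inr hx)⟩,
    fun h x hx => hx.elim (fun hx => h.1 x hx) (fun hx => h.2 x hx)⟩

/-- If the Ω-polarity `P` (carried by subsets `Xs ⊆ X'`, `Ys ⊆ Y'` with the restricted
relations) is an inner substructure of the Ω-polarity `P'`, then `A ↦ A ∩ X` (here the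
preimage under the inclusion) is a surjective homomorphism from the stable set lattice of
`P'` onto that of `P`, preserving binary meets, binary joins, top, bottom and the
operators `f` and `g`. -/
theorem stmt11 {X' Y' : Type*} {n m : ℕ}
    (R' : X' → Y' → Prop) (S' : (Fin n → X') → Y' → Prop) (T' : X' → (Fin m → Y') → Prop)
    (hS' : SSectionsStable R' S') (hT' : TSectionsStable R' T')
    (Xs : Set X') (Ys : Set Y')
    -- the relations of `P` are the restrictions of those of `P'`
    (R : ↥Xs → ↥Ys → Prop) (S : (Fin n → ↥Xs) → ↥Ys → Prop) (T : ↥Xs → (Fin m → ↥Ys) → Prop)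
    (hR : ∀ (x : ↥Xs) (y : ↥Ys), R x y ↔ R' x.val y.val)
    (hSr : ∀ (xs : Fin n → ↥Xs) (y : ↥Ys), S xs y ↔ S' (fun i => (xs i).val) y.val)
    (hTr : ∀ (x : ↥Xs) (ys : Fin m → ↥Ys), T x ys ↔ T' x.val (fun i => (ys i).val))
    -- `P` is an Ω-polarity
    (hS : SSectionsStable R S) (hT : TSectionsStable R T)
    -- the inclusions form a bounded morphism (P is an inner substructure of P')
    (hincl : IsBddMorphism R S T R' S' T'
      (Subtype.val : ↥Xs → X') (Subtype.val : ↥Ys → Y')) :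
    -- the map sends stable sets to stable sets
    (∀ A : Set X', StableX R' A → StableX R (Subtype.val ⁻¹' A)) ∧
    -- it is surjective onto the stable sets of `P`
    (∀ B : Set ↥Xs, StableX R B →
      ∃ A : Set X', StableX R' A ∧ Subtype.val ⁻¹' A = B) ∧
    -- it preserves binary meets
    (∀ A B : Set X', StableX R' A → StableX R' B →
      (Subtype.val ⁻¹' (A ∩ B) : Set ↥Xs) = Subtype.val ⁻¹' A ∩ Subtype.val ⁻¹' B) ∧
    -- it preserves binary joins `A ∨ B = λ_R ρ_R (A ∪ B)`
    (∀ A B : Set X', StableX R' A → StableX R' B →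
      (Subtype.val ⁻¹' (lpolar R' (rpolar R' (A ∪ B))) : Set ↥Xs) =
        lpolar R (rpolar R (Subtype.val ⁻¹' A ∪ Subtype.val ⁻¹' B))) ∧
    -- it preserves top
    ((Subtype.val ⁻¹' (Set.univ : Set X') : Set ↥Xs) = Set.univ) ∧
    -- it preserves bottom
    ((Subtype.val ⁻¹' (lpolar R' (Set.univ : Set Y')) : Set ↥Xs) =
      lpolar R (Set.univ : Set ↥Ys)) ∧
    -- it preserves the operators
    (∀ A : Fin n → Set X', (∀ i, StableX R' (A i)) →
      (Subtype.val ⁻¹' (fS R' S' A) : Set ↥Xs) = fS R S (fun i => Subtype.val ⁻¹' (A i))) ∧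
    (∀ A : Fin m → Set X', (∀ i, StableX R' (A i)) →
      (Subtype.val ⁻¹' (gT R' T' A) : Set ↥Xs) = gT R T (fun i => Subtype.val ⁻¹' (A i))) := by
  have hrp : ∀ A : Set X', StableX R' A →
      rpolar R (Subtype.val ⁻¹' A) = (Subtype.val ⁻¹' (rpolar R' A) : Set ↥Ys) := by
    intro A hA
    ext y
    constructor
    · intro hy x' hx'
      apply hincl.forthR1
      intro x hle
      exact hy x (stableX_up R' hA hx' hle)
    · intro hy z hz
      exact (hR z y).mpr (hy z.val hz)
  have hlp : ∀ B : Set Y', StableY R' B →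
      (Subtype.val ⁻¹' (lpolar R' B) : Set ↥Xs) = lpolar R (Subtype.val ⁻¹' B) := by
    intro B hB
    ext x
    constructor
    · intro hx y hy
      exact (hR x y).mpr (hx y.val hy)
    · intro hx y' hy'
      apply hincl.forthR2
      intro y hle
      exact hx y (stableY_up R' hB hy' hle)
  have part1 : ∀ A : Set X', StableX R' A → StableX R (Subtype.val ⁻¹' A) := by
    intro A hA
    have h1 : (Subtype.val ⁻¹' A : Set ↥Xs) =
        lpolar R (Subtype.val ⁻¹' (rpolar R' A)) := by
      conv_lhs => rw [hA]
      exact hlp _ (rpolar_stable R' A)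
    show Subtype.val ⁻¹' A = lpolar R (rpolar R (Subtype.val ⁻¹' A))
    rw [hrp A hA]
    exact h1
  refine ⟨part1, ?_, ?_, ?_, ?_, ?_, ?_, ?_⟩
  · -- surjectivity
    intro B hB
    refine ⟨lpolar R' (rpolar R' (Subtype.val '' B)), lpolar_stable R' _, ?_⟩
    ext x
    constructor
    · intro hx
      rw [hB]
      intro y hy
      refine (hR x y).mpr (hx y.val ?_)
      rintro x' ⟨b, hb, rfl⟩
      exact (hR b y).mp (hy b hb)
    · intro hx
      exact lp_rp_sub R' _ ⟨x, hx, rfl⟩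
  · -- meets
    intro A B _ _
    exact Set.preimage_inter
  · -- joins
    intro A B hA hB
    rw [hlp _ (rpolar_stable R' (A ∪ B))]
    congr 1
    rw [rpolar_union, Set.preimage_inter, ← hrp A hA, ← hrp B hB, ← rpolar_union]
  · -- top
    exact Set.preimage_univ
  · -- bottom
    have huniv : StableY R' (Set.univ : Set Y') :=
      Set.Subset.antisymm (rp_lp_sub R' _) (Set.subset_univ _)
    rw [hlp _ huniv, Set.preimage_univ]
  · -- fS
    intro A hA
    have hC : StableY R' {y | ∀ xs : Fin n → X', (∀ i, xs i ∈ A i) → S' xs y} := by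
      refine Set.Subset.antisymm (rp_lp_sub R' _) ?_
      intro y hy xs hxs
      have hsub : {y | ∀ xs : Fin n → X', (∀ i, xs i ∈ A i) → S' xs y} ⊆
          {y | S' xs y} := fun y' hy' => hy' xs hxs
      have h2 := rpolar_anti R' (lpolar_anti R' hsub) hy
      rw [← hS'.1 xs] at h2
      exact h2
    show (Subtype.val ⁻¹' (lpolar R' {y | ∀ xs : Fin n → X',
        (∀ i, xs i ∈ A i) → S' xs y}) : Set ↥Xs) = fS R S _
    have hset : (Subtype.val ⁻¹' {y | ∀ xs : Fin n → X', (∀ i, xs i ∈ A i) → S' xs y} :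
        Set ↥Ys) =
        {y : ↥Ys | ∀ xs : Fin n → ↥Xs, (∀ i, xs i ∈ Subtype.val ⁻¹' (A i)) → S xs y} := by
      ext y
      constructor
      · intro hy xs hxs
        exact (hSr xs y).mpr (hy _ (fun i => hxs i))
      · intro hy xs' hxs'
        apply hincl.forthS
        intro xs hle
        exact hy xs (fun i => stableX_up R' (hA i) (hxs' i) (hle i))
    rw [hlp _ hC, hset]
    rfl
  · -- gT
    intro A hA
    ext x
    constructor
    · intro hx ys hys
      refine (hTr x ys).mpr (hx _ ?_)
      intro i
      have h2 : ys i ∈ rpolar R (Subtype.val ⁻¹' (A i)) := hys i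
      rw [hrp (A i) (hA i)] at h2
      exact h2
    · intro hx ys' hys'
      apply hincl.forthT
      intro ys hle
      apply hx
      intro i
      show ys i ∈ rpolar R (Subtype.val ⁻¹' (A i))
      rw [hrp (A i) (hA i)]
      exact stableY_up R' (rpolar_stable R' (A i)) (hys' i) (hle i)
end

section
/- Let (α, β) : P → P′ be a bounded morphism between Ω-polarities such that α and β are injective and (α, β) preserves the relations R, S and T (x R y implies α(x) R′ β(y), x⃗ S y implies α(x⃗) S′ β(y), x T y⃗ implies α(x) T′ β(y⃗)). Then (α, β), viewed as a pair of maps into im(α, β) = (α[X], β[Y], R″, S″, T″) with the restricted relations, is an isomorphism of Ω-polarities from P onto im(α, β): it is a bounded morphism possessing an inverse bounded morphism. -/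
/-- The polarity relation of the image structure `im(α, β)`, on the images of `α` and `β`. -/
def imR {X Y X' Y' : Type*} (R' : X' → Y' → Prop) (α : X → X') (β : Y → Y') :
    ↥(Set.range α) → ↥(Set.range β) → Prop :=
  fun x y => R' x.val y.val

/-- The `S`-relation of the image structure `im(α, β)`. -/
def imS {X Y X' Y' : Type*} {n : ℕ} (S' : (Fin n → X') → Y' → Prop)
    (α : X → X') (β : Y → Y') :
    (Fin n → ↥(Set.range α)) → ↥(Set.range β) → Prop :=
  fun xs y => S' (fun i => (xs i).val) y.val

/-- The `T`-relation of the image structure `im(α, β)`. -/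
def imT {X Y X' Y' : Type*} {m : ℕ} (T' : X' → (Fin m → Y') → Prop)
    (α : X → X') (β : Y → Y') :
    ↥(Set.range α) → (Fin m → ↥(Set.range β)) → Prop :=
  fun x ys => T' x.val (fun i => (ys i).val)

lemma le1_iff' {X Y : Type*} (R : X → Y → Prop) (x z : X) :
    le1 R x z ↔ ∀ y, R x y → R z y := by
  constructor
  · intro hle y hxy
    have hy : y ∈ rpolar R {x} := by
      intro a ha; rw [Set.mem_singleton_iff] at ha; subst ha; exact hxy
    exact hle hy z rfl
  · intro hall y hy a ha
    rw [Set.mem_singleton_iff] at ha; subst ha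
    exact hall y (hy x rfl)

lemma le2_iff' {X Y : Type*} (R : X → Y → Prop) (y w : Y) :
    le2 R y w ↔ ∀ x, R x y → R x w := by
  constructor
  · intro hle x hxy
    have hx : x ∈ lpolar R {y} := by
      intro a ha; rw [Set.mem_singleton_iff] at ha; subst ha; exact hxy
    exact hle hx w rfl
  · intro hall x hx a ha
    rw [Set.mem_singleton_iff] at ha; subst ha
    exact hall x (hx y rfl)

/-- If the components of a bounded morphism `(α, β)` of Ω-polarities are injective and
preserve the relations `R`, `S` and `T`, then `(α, β)`, corestricted to the image
structure `im(α, β)`, is an isomorphism of Ω-polarities: a bounded morphism with a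
two-sided inverse bounded morphism. -/
theorem stmt13 {X Y X' Y' : Type*} {n m : ℕ}
    (R : X → Y → Prop) (S : (Fin n → X) → Y → Prop) (T : X → (Fin m → Y) → Prop)
    (hS : SSectionsStable R S) (hT : TSectionsStable R T)
    (R' : X' → Y' → Prop) (S' : (Fin n → X') → Y' → Prop) (T' : X' → (Fin m → Y') → Prop)
    (hS' : SSectionsStable R' S') (hT' : TSectionsStable R' T')
    (α : X → X') (β : Y → Y') (h : IsBddMorphism R S T R' S' T' α β)
    (hαinj : Function.Injective α) (hβinj : Function.Injective β)
    (hpresR : ∀ (x : X) (y : Y), R x y → R' (α x) (β y))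
    (hpresS : ∀ (xs : Fin n → X) (y : Y), S xs y → S' (fun i => α (xs i)) (β y))
    (hpresT : ∀ (x : X) (ys : Fin m → Y), T x ys → T' (α x) (fun i => β (ys i))) :
    IsBddMorphism R S T (imR R' α β) (imS S' α β) (imT T' α β)
      (fun x => (⟨α x, Set.mem_range_self x⟩ : ↥(Set.range α)))
      (fun y => (⟨β y, Set.mem_range_self y⟩ : ↥(Set.range β))) ∧
    ∃ (α' : ↥(Set.range α) → X) (β' : ↥(Set.range β) → Y),
      IsBddMorphism (imR R' α β) (imS S' α β) (imT T' α β) R S T α' β' ∧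
      (∀ x : X, α' ⟨α x, Set.mem_range_self x⟩ = x) ∧
      (∀ y : Y, β' ⟨β y, Set.mem_range_self y⟩ = y) ∧
      (∀ x' : ↥(Set.range α), α (α' x') = x'.val) ∧
      (∀ y' : ↥(Set.range β), β (β' y') = y'.val) := by
  classical
  set ι : X → ↥(Set.range α) := fun x => ⟨α x, Set.mem_range_self x⟩ with hι
  set κ : Y → ↥(Set.range β) := fun y => ⟨β y, Set.mem_range_self y⟩ with hκ
  -- inverse maps
  set α' : ↥(Set.range α) → X := fun a => Classical.choose a.2 with hα'def
  set β' : ↥(Set.range β) → Y := fun b => Classical.choose b.2 with hβ'def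
  have hα' : ∀ a : ↥(Set.range α), α (α' a) = a.val := fun a => Classical.choose_spec a.2
  have hβ' : ∀ b : ↥(Set.range β), β (β' b) = b.val := fun b => Classical.choose_spec b.2
  have hα'ι : ∀ x : X, α' (ι x) = x := fun x => hαinj (hα' (ι x))
  have hβ'κ : ∀ y : Y, β' (κ y) = y := fun y => hβinj (hβ' (κ y))
  have fwd : IsBddMorphism R S T (imR R' α β) (imS S' α β) (imT T' α β) ι κ := by
    constructor
    · intro x z hxz
      rw [le1_iff'] at hxz ⊢
      intro y' hxy'
      obtain ⟨y0, hy0⟩ := y'.2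
      have hR : R x y0 := h.backR (by rw [hy0]; exact hxy')
      have : R' (α z) (β y0) := hpresR _ _ (hxz y0 hR)
      show R' (α z) y'.val
      rwa [← hy0]
    · intro y w hyw
      rw [le2_iff'] at hyw ⊢
      intro x' hx'y
      obtain ⟨x0, hx0⟩ := x'.2
      have hR : R x0 y := h.backR (by rw [hx0]; exact hx'y)
      have : R' (α x0) (β w) := hpresR _ _ (hyw x0 hR)
      show R' x'.val (β w)
      rwa [← hx0]
    · intro x y hxy
      exact h.backR hxy
    · intro a y hyp
      obtain ⟨x0, hx0⟩ := a.2
      have hle : le1 (imR R' α β) a (ι x0) := by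
        rw [le1_iff']
        intro y' hy'
        show R' (α x0) y'.val
        rwa [hx0]
      have hR : R x0 y := hyp x0 hle
      show R' a.val (β y)
      rw [← hx0]
      exact hpresR _ _ hR
    · intro x b hyp
      obtain ⟨y0, hy0⟩ := b.2
      have hle : le2 (imR R' α β) b (κ y0) := by
        rw [le2_iff']
        intro x' hx'
        show R' x'.val (β y0)
        rwa [hy0]
      have hR : R x y0 := hyp y0 hle
      show R' (α x) b.val
      rw [← hy0]
      exact hpresR _ _ hR
    · intro xs y hS0
      exact h.backS hS0
    · intro xs' y hyp
      choose zs hzs using fun i => (xs' i).2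
      have hle : ∀ i, le1 (imR R' α β) (xs' i) (ι (zs i)) := by
        intro i
        rw [le1_iff']
        intro y' hy'
        show R' (α (zs i)) y'.val
        rwa [hzs i]
      have hS0 : S zs y := hyp zs hle
      have := hpresS zs y hS0
      show S' (fun i => (xs' i).val) (β y)
      have heq : (fun i => (xs' i).val) = fun i => α (zs i) := by
        funext i; exact (hzs i).symm
      rwa [heq]
    · intro x ys hT0
      exact h.backT hT0
    · intro x ys' hyp
      choose ws hws using fun i => (ys' i).2
      have hle : ∀ i, le2 (imR R' α β) (ys' i) (κ (ws i)) := by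
        intro i
        rw [le2_iff']
        intro x' hx'
        show R' x'.val (β (ws i))
        rwa [hws i]
      have hT0 : T x ws := hyp ws hle
      have := hpresT x ws hT0
      show T' (α x) (fun i => (ys' i).val)
      have heq : (fun i => (ys' i).val) = fun i => β (ws i) := by
        funext i; exact (hws i).symm
      rwa [heq]
  refine ⟨fwd, α', β', ?_, hα'ι, hβ'κ, hα', hβ'⟩
  constructor
  · intro a b hab
    rw [le1_iff'] at hab ⊢
    intro y hy
    have h1 : R' a.val (β y) := by rw [← hα' a]; exact hpresR _ _ hy
    have h2 : (imR R' α β) b (κ y) := hab (κ y) h1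
    exact h.backR (by rw [hα' b]; exact h2)
  · intro b c hbc
    rw [le2_iff'] at hbc ⊢
    intro x hx
    have h1 : R' (α x) b.val := by rw [← hβ' b]; exact hpresR _ _ hx
    have h2 : (imR R' α β) (ι x) c := hbc (ι x) h1
    exact h.backR (by rw [hβ' c]; exact h2)
  · intro a b hab
    show R' a.val b.val
    rw [← hα' a, ← hβ' b]
    exact hpresR _ _ hab
  · intro x b hyp
    have hle : le1 R x (α' (ι x)) := by rw [hα'ι x, le1_iff']; exact fun _ h => h
    have h1 : (imR R' α β) (ι x) b := hyp (ι x) hle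
    have h2 : R' (α x) (β (β' b)) := by rwa [hβ' b]
    exact h.backR h2
  · intro a y hyp
    have hle : le2 R y (β' (κ y)) := by rw [hβ'κ y, le2_iff']; exact fun _ h => h
    have h1 : (imR R' α β) a (κ y) := hyp (κ y) hle
    have h2 : R' (α (α' a)) (β y) := by rwa [hα' a]
    exact h.backR h2
  · intro xs b hSab
    show S' (fun i => (xs i).val) b.val
    have heq : (fun i => (xs i).val) = fun i => α (α' (xs i)) := by
      funext i; exact (hα' (xs i)).symm
    rw [heq, ← hβ' b]
    exact hpresS _ _ hSab
  · intro xs b hyp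
    have hle : ∀ i, le1 R (xs i) (α' (ι (xs i))) := by
      intro i; rw [hα'ι, le1_iff']; exact fun _ h => h
    have h1 : (imS S' α β) (fun i => ι (xs i)) b := hyp (fun i => ι (xs i)) hle
    have h2 : S' (fun i => α (xs i)) (β (β' b)) := by rw [hβ' b]; exact h1
    exact h.backS h2
  · intro a ys hTab
    show T' a.val (fun i => (ys i).val)
    have heq : (fun i => (ys i).val) = fun i => β (β' (ys i)) := by
      funext i; exact (hβ' (ys i)).symm
    rw [heq, ← hα' a]
    exact hpresT _ _ hTab
  · intro a ys hyp
    have hle : ∀ i, le2 R (ys i) (β' (κ (ys i))) := by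
      intro i; rw [hβ'κ, le2_iff']; exact fun _ h => h
    have h1 : (imT T' α β) a (fun i => κ (ys i)) := hyp (fun i => κ (ys i)) hle
    have h2 : T' (α (α' a)) (fun i => β (ys i)) := by rw [hα' a]; exact h1
    exact h.backT h2
end
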